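/- In the KL-control setting, for every time t ∈ {0,...,T} and every probability vector P on the node set {1,...,V}, the optimal value V_t(P) := inf over all admissible policies {Q_τ}_{τ=t}^{T−1} of Σ_{τ=t}^{T−1} Σ_{i,j} P_τ^i Q_τ^{ij} (C_τ^{ij} + α·log(Q_τ^{ij}/R_τ^{ij})), where P_t = P and P_{τ+1}^j = Σ_i P_τ^i Q_τ^{ij}, equals −α · Σ_{i=1}^V P^i · log φ_t^i. -/

import Mathlib

/-- Gibbs-type pointwise inequality. -/
lemma kl_aux_key (q a s : ℝ) (hq : 0 ≤ q) (ha : 0 < a) (hs : 0 < s) :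
    q - a / s - q * Real.log s ≤ q * Real.log (q / a) := by
  rcases hq.eq_or_lt with h | h
  · subst q
    have : 0 ≤ a / s := by positivity
    simp only [zero_mul, zero_sub, sub_zero, neg_nonpos]
    linarith
  · have hqs : 0 < q * s := by positivity
    have h1 : Real.log (a / (q * s)) ≤ a / (q * s) - 1 :=
      Real.log_le_sub_one_of_pos (by positivity)
    have e1 : Real.log (a / (q * s)) = Real.log a - (Real.log q + Real.log s) := by
      rw [Real.log_div ha.ne' hqs.ne', Real.log_mul h.ne' hs.ne']
    have e2 : Real.log (q / a) = Real.log q - Real.log a :=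
      Real.log_div h.ne' ha.ne'
    have h2 : q * (Real.log a - (Real.log q + Real.log s)) ≤ q * (a / (q * s) - 1) :=
      mul_le_mul_of_nonneg_left (by linarith [e1 ▸ h1]) hq
    have h3 : q * (a / (q * s) - 1) = a / s - q := by
      field_simp
    rw [e2]
    nlinarith [h2, h3]

/-- Rewriting identity for the per-step cost. -/
lemma kl_aux_ident (α c r f q : ℝ) (hα : 0 < α) (hr : 0 < r) (hf : 0 < f) (hq : 0 ≤ q) :
    q * (c + α * Real.log (q / r))
      = α * (q * Real.log (q / (r * Real.exp (-c / α) * f))) + α * (q * Real.log f) := by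
  rcases hq.eq_or_lt with h | h
  · subst q; simp
  · have hre : (0:ℝ) < r * Real.exp (-c / α) * f := by positivity
    rw [Real.log_div h.ne' hre.ne', Real.log_mul (by positivity) hf.ne',
      Real.log_mul hr.ne' (Real.exp_pos _).ne', Real.log_exp,
      Real.log_div h.ne' hr.ne']
    field_simp
    ring

/-- Telescoping sum over an interval. -/
lemma kl_telescope (f : ℕ → ℝ) (t T : ℕ) (h : t ≤ T) :
    ∑ τ ∈ Finset.Ico t T, (f τ - f (τ + 1)) = f t - f T := by
  induction T, h using Nat.le_induction with
  | base => simp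
  | succ n hn ih => rw [Finset.sum_Ico_succ_top (by omega), ih]; ring

theorem stmt_0
    (V T : ℕ) (hV : 1 ≤ V) (hT : 1 ≤ T)
    (α : ℝ) (hα : 0 < α)
    (C R : ℕ → Fin V → Fin V → ℝ)
    (hRpos : ∀ t, t < T → ∀ i j, 0 < R t i j)
    (hRsum : ∀ t, t < T → ∀ i, ∑ j, R t i j = 1)
    (φ : ℕ → Fin V → ℝ)
    (hφT : ∀ i, φ T i = 1)
    (hφ : ∀ t, t < T → ∀ i,
      φ t i = ∑ j, R t i j * Real.exp (-(C t i j) / α) * φ (t + 1) j)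
    (t : ℕ) (ht : t ≤ T)
    (P0 : Fin V → ℝ) (hP0 : ∀ i, 0 ≤ P0 i) (hP0sum : ∑ i, P0 i = 1) :
    IsGLB
      { c : ℝ | ∃ (Q : ℕ → Fin V → Fin V → ℝ) (P : ℕ → Fin V → ℝ),
          (∀ τ, t ≤ τ → τ < T → ∀ i j, 0 ≤ Q τ i j) ∧
          (∀ τ, t ≤ τ → τ < T → ∀ i, ∑ j, Q τ i j = 1) ∧
          P t = P0 ∧
          (∀ τ, t ≤ τ → τ < T → ∀ j, P (τ + 1) j = ∑ i, P τ i * Q τ i j) ∧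
          c = ∑ τ ∈ Finset.Ico t T, ∑ i, ∑ j,
                P τ i * Q τ i j *
                  (C τ i j + α * Real.log (Q τ i j / R τ i j)) }
      (-α * ∑ i, P0 i * Real.log (φ t i)) := by
  haveI : Nonempty (Fin V) := ⟨⟨0, hV⟩⟩
  -- positivity of φ
  have φpos : ∀ τ, τ ≤ T → ∀ i, 0 < φ τ i := by
    have key : ∀ n τ, τ + n = T → ∀ i, 0 < φ τ i := by
      intro n
      induction n with
      | zero =>
        intro τ h i
        have : τ = T := by omega
        subst this
        rw [hφT]; exact one_pos
      | succ n ih =>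
        intro τ h i
        have hτT : τ < T := by omega
        rw [hφ τ hτT i]
        apply Finset.sum_pos
        · intro j _
          exact mul_pos (mul_pos (hRpos τ hτT i j) (Real.exp_pos _))
            (ih (τ + 1) (by omega) j)
        · exact Finset.univ_nonempty
    intro τ hτ i; exact key (T - τ) τ (by omega) i
  constructor
  · -- lower bound
    rintro c ⟨Q, P, hQ0, hQ1, hPt, hrec, rfl⟩
    -- nonnegativity of P along the trajectory
    have hPnn : ∀ τ, t ≤ τ → τ ≤ T → ∀ i, 0 ≤ P τ i := by
      intro τ hτ
      induction τ, hτ using Nat.le_induction with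
      | base => intro _ i; rw [hPt]; exact hP0 i
      | succ n hn ih =>
        intro h i
        have hnT : n < T := by omega
        rw [hrec n hn hnT i]
        exact Finset.sum_nonneg fun k _ =>
          mul_nonneg (ih (by omega) k) (hQ0 n hn hnT k i)
    -- normalization of P along the trajectory
    have hPsum : ∀ τ, t ≤ τ → τ ≤ T → ∑ i, P τ i = 1 := by
      intro τ hτ
      induction τ, hτ using Nat.le_induction with
      | base => intro _; rw [hPt]; exact hP0sum
      | succ n hn ih =>
        intro h
        have hnT : n < T := by omega
        calc ∑ j, P (n + 1) j = ∑ j, ∑ i, P n i * Q n i j := by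
              simp_rw [hrec n hn hnT]
          _ = ∑ i, ∑ j, P n i * Q n i j := Finset.sum_comm
          _ = ∑ i, P n i * ∑ j, Q n i j := by simp_rw [Finset.mul_sum]
          _ = ∑ i, P n i := by
              refine Finset.sum_congr rfl fun i _ => ?_
              rw [hQ1 n hn hnT i, mul_one]
          _ = 1 := ih (by omega)
    -- per-stage inequality
    have hstage : ∀ τ, t ≤ τ → τ < T →
        (-α * ∑ i, P τ i * Real.log (φ τ i))
          - (-α * ∑ i, P (τ + 1) i * Real.log (φ (τ + 1) i))
        ≤ ∑ i, ∑ j, P τ i * Q τ i j *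
            (C τ i j + α * Real.log (Q τ i j / R τ i j)) := by
      intro τ hτ hτT
      have hg : ∑ j, P (τ + 1) j * Real.log (φ (τ + 1) j)
          = ∑ i, ∑ j, P τ i * (Q τ i j * Real.log (φ (τ + 1) j)) :=
        calc ∑ j, P (τ + 1) j * Real.log (φ (τ + 1) j)
            = ∑ j, ∑ i, P τ i * (Q τ i j * Real.log (φ (τ + 1) j)) := by
              simp_rw [hrec τ hτ hτT, Finset.sum_mul, mul_assoc]
          _ = ∑ i, ∑ j, P τ i * (Q τ i j * Real.log (φ (τ + 1) j)) := Finset.sum_comm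
      rw [hg]
      have hmain : ∀ i,
          α * (∑ j, P τ i * (Q τ i j * Real.log (φ (τ + 1) j)))
            - α * (P τ i * Real.log (φ τ i))
          ≤ ∑ j, P τ i * Q τ i j *
              (C τ i j + α * Real.log (Q τ i j / R τ i j)) := by
        intro i
        have hp : 0 ≤ P τ i := hPnn τ hτ (by omega) i
        have hs : 0 < φ τ i := φpos τ (by omega) i
        have inner : α * (∑ j, Q τ i j * Real.log (φ (τ + 1) j))
            - α * Real.log (φ τ i)
            ≤ ∑ j, Q τ i j * (C τ i j + α * Real.log (Q τ i j / R τ i j)) := by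
          set a : Fin V → ℝ :=
            fun j => R τ i j * Real.exp (-(C τ i j) / α) * φ (τ + 1) j with ha
          have hapos : ∀ j, 0 < a j := fun j =>
            mul_pos (mul_pos (hRpos τ hτT i j) (Real.exp_pos _))
              (φpos (τ + 1) (by omega) j)
          have hasum : ∑ j, a j = φ τ i := (hφ τ hτT i).symm
          have h1 : ∑ j, (Q τ i j - a j / φ τ i - Q τ i j * Real.log (φ τ i))
              ≤ ∑ j, Q τ i j * Real.log (Q τ i j / a j) :=
            Finset.sum_le_sum fun j _ =>
              kl_aux_key (Q τ i j) (a j) (φ τ i) (hQ0 τ hτ hτT i j) (hapos j) hs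
          have h2 : ∑ j, (Q τ i j - a j / φ τ i - Q τ i j * Real.log (φ τ i))
              = 1 - 1 - Real.log (φ τ i) := by
            rw [Finset.sum_sub_distrib, Finset.sum_sub_distrib, hQ1 τ hτ hτT i,
              ← Finset.sum_div, hasum, div_self hs.ne', ← Finset.sum_mul,
              hQ1 τ hτ hτT i, one_mul]
          have h3 : ∑ j, Q τ i j * (C τ i j + α * Real.log (Q τ i j / R τ i j))
              = α * (∑ j, Q τ i j * Real.log (Q τ i j / a j))
                + α * (∑ j, Q τ i j * Real.log (φ (τ + 1) j)) := by
            rw [Finset.mul_sum, Finset.mul_sum, ← Finset.sum_add_distrib]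
            refine Finset.sum_congr rfl fun j _ => ?_
            exact kl_aux_ident α (C τ i j) (R τ i j) (φ (τ + 1) j) (Q τ i j) hα
              (hRpos τ hτT i j) (φpos (τ + 1) (by omega) j) (hQ0 τ hτ hτT i j)
          have h4 : -Real.log (φ τ i) ≤ ∑ j, Q τ i j * Real.log (Q τ i j / a j) := by
            rw [h2] at h1; linarith
          rw [h3]
          nlinarith [mul_le_mul_of_nonneg_left h4 hα.le]
        have e1 : ∑ j, P τ i * (Q τ i j * Real.log (φ (τ + 1) j))
            = P τ i * ∑ j, Q τ i j * Real.log (φ (τ + 1) j) := by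
          rw [Finset.mul_sum]
        have e2 : ∑ j, P τ i * Q τ i j *
              (C τ i j + α * Real.log (Q τ i j / R τ i j))
            = P τ i * ∑ j, Q τ i j *
              (C τ i j + α * Real.log (Q τ i j / R τ i j)) := by
          rw [Finset.mul_sum]
          exact Finset.sum_congr rfl fun j _ => by ring
        rw [e1, e2]
        nlinarith [mul_le_mul_of_nonneg_left inner hp]
      have erw : (-α * ∑ i, P τ i * Real.log (φ τ i))
            - (-α * ∑ i, ∑ j, P τ i * (Q τ i j * Real.log (φ (τ + 1) j)))
          = ∑ i, (α * (∑ j, P τ i * (Q τ i j * Real.log (φ (τ + 1) j)))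
              - α * (P τ i * Real.log (φ τ i))) := by
        rw [Finset.sum_sub_distrib, ← Finset.mul_sum, ← Finset.mul_sum]; ring
      rw [erw]
      exact Finset.sum_le_sum fun i _ => hmain i
    -- sum up and telescope
    have hsum := Finset.sum_le_sum fun τ hτ =>
      hstage τ (Finset.mem_Ico.1 hτ).1 (Finset.mem_Ico.1 hτ).2
    rw [kl_telescope (fun τ => -α * ∑ i, P τ i * Real.log (φ τ i)) t T ht] at hsum
    have hfT : ∑ i, P T i * Real.log (φ T i) = 0 := by simp [hφT]
    have hft : ∑ i, P t i * Real.log (φ t i) = ∑ i, P0 i * Real.log (φ t i) := by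
      rw [hPt]
    simp only [hfT, hft, mul_zero, sub_zero] at hsum
    exact hsum
  · -- greatest lower bound: the value is attained
    intro b hb
    apply hb
    -- the optimal policy
    set Qs : ℕ → Fin V → Fin V → ℝ :=
      fun τ i j => R τ i j * Real.exp (-(C τ i j) / α) * φ (τ + 1) j / φ τ i with hQsdef
    set F : ℕ → Fin V → ℝ :=
      fun n => Nat.rec P0 (fun n Pn => fun j => ∑ i, Pn i * Qs (t + n) i j) n with hFdef
    set Pf : ℕ → Fin V → ℝ := fun τ => F (τ - t) with hPfdef
    have hQsum : ∀ τ, τ < T → ∀ i, ∑ j, Qs τ i j = 1 := by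
      intro τ hτT i
      show ∑ j, R τ i j * Real.exp (-(C τ i j) / α) * φ (τ + 1) j / φ τ i = 1
      rw [← Finset.sum_div, ← hφ τ hτT i, div_self (φpos τ (by omega) i).ne']
    have hPft : Pf t = P0 := by
      show F (t - t) = P0
      rw [Nat.sub_self]
      rfl
    have hrec' : ∀ τ, t ≤ τ → ∀ j, Pf (τ + 1) j = ∑ i, Pf τ i * Qs τ i j := by
      intro τ hτ j
      show F (τ + 1 - t) j = ∑ i, F (τ - t) i * Qs τ i j
      have h1 : τ + 1 - t = (τ - t) + 1 := by omega
      rw [h1]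
      show (∑ i, F (τ - t) i * Qs (t + (τ - t)) i j) = ∑ i, F (τ - t) i * Qs τ i j
      rw [Nat.add_sub_cancel' hτ]
    have hlogQ : ∀ τ, τ < T → ∀ i j,
        C τ i j + α * Real.log (Qs τ i j / R τ i j)
          = α * Real.log (φ (τ + 1) j) - α * Real.log (φ τ i) := by
      intro τ hτT i j
      have hs := φpos τ (by omega) i
      have hf := φpos (τ + 1) (by omega) j
      have hr := hRpos τ hτT i j
      have hdiv : Qs τ i j / R τ i j
          = Real.exp (-(C τ i j) / α) * φ (τ + 1) j / φ τ i := by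
        show R τ i j * Real.exp (-(C τ i j) / α) * φ (τ + 1) j / φ τ i / R τ i j
          = Real.exp (-(C τ i j) / α) * φ (τ + 1) j / φ τ i
        field_simp
      rw [hdiv, Real.log_div (by positivity) hs.ne',
        Real.log_mul (Real.exp_pos _).ne' hf.ne', Real.log_exp]
      field_simp
      ring
    have hstageEq : ∀ τ, t ≤ τ → τ < T →
        ∑ i, ∑ j, Pf τ i * Qs τ i j *
            (C τ i j + α * Real.log (Qs τ i j / R τ i j))
          = (-α * ∑ i, Pf τ i * Real.log (φ τ i))
            - (-α * ∑ i, Pf (τ + 1) i * Real.log (φ (τ + 1) i)) := by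
      intro τ hτ hτT
      have hg : ∑ j, Pf (τ + 1) j * Real.log (φ (τ + 1) j)
          = ∑ i, ∑ j, Pf τ i * (Qs τ i j * Real.log (φ (τ + 1) j)) :=
        calc ∑ j, Pf (τ + 1) j * Real.log (φ (τ + 1) j)
            = ∑ j, ∑ i, Pf τ i * (Qs τ i j * Real.log (φ (τ + 1) j)) := by
              simp_rw [hrec' τ hτ, Finset.sum_mul, mul_assoc]
          _ = _ := Finset.sum_comm
      calc ∑ i, ∑ j, Pf τ i * Qs τ i j *
              (C τ i j + α * Real.log (Qs τ i j / R τ i j))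
          = ∑ i, (α * (∑ j, Pf τ i * (Qs τ i j * Real.log (φ (τ + 1) j)))
              - α * (Pf τ i * Real.log (φ τ i))) := by
            refine Finset.sum_congr rfl fun i _ => ?_
            have : ∀ j, Pf τ i * Qs τ i j *
                (C τ i j + α * Real.log (Qs τ i j / R τ i j))
                = α * (Pf τ i * (Qs τ i j * Real.log (φ (τ + 1) j)))
                  - α * (Pf τ i * Real.log (φ τ i)) * Qs τ i j := by
              intro j; rw [hlogQ τ hτT i j]; ring
            simp_rw [this]
            rw [Finset.sum_sub_distrib, ← Finset.mul_sum, ← Finset.mul_sum,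
              ← Finset.mul_sum, hQsum τ hτT i, mul_one]
        _ = α * (∑ i, ∑ j, Pf τ i * (Qs τ i j * Real.log (φ (τ + 1) j)))
              - α * (∑ i, Pf τ i * Real.log (φ τ i)) := by
            rw [Finset.sum_sub_distrib, ← Finset.mul_sum, ← Finset.mul_sum]
        _ = _ := by rw [← hg]; ring
    refine ⟨Qs, Pf, ?_, ?_, hPft, ?_, ?_⟩
    · intro τ hτ hτT i j
      exact div_nonneg
        (mul_nonneg (mul_nonneg (hRpos τ hτT i j).le (Real.exp_pos _).le)
          (φpos (τ + 1) (by omega) j).le)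
        (φpos τ (by omega) i).le
    · intro τ hτ hτT i
      exact hQsum τ hτT i
    · intro τ hτ hτT j
      exact hrec' τ hτ j
    · -- the achieved cost
      have htel : ∑ τ ∈ Finset.Ico t T, ∑ i, ∑ j, Pf τ i * Qs τ i j *
            (C τ i j + α * Real.log (Qs τ i j / R τ i j))
          = (-α * ∑ i, Pf t i * Real.log (φ t i))
            - (-α * ∑ i, Pf T i * Real.log (φ T i)) := by
        rw [← kl_telescope (fun τ => -α * ∑ i, Pf τ i * Real.log (φ τ i)) t T ht]
        exact Finset.sum_congr rfl fun τ hτ =>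
          hstageEq τ (Finset.mem_Ico.1 hτ).1 (Finset.mem_Ico.1 hτ).2
      rw [htel, hPft]
      simp [hφT]
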